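/- arXiv:2201.04221 — 3 statements merged into one kernel-verified Lean document; each statement's English description precedes it below -/
import Mathlib

section
/- Let Φ be a finite set of linear functionals on ℝⁿ that is positively nontrivial (every nontrivial nonnegative combination is a nonzero functional). Then there exists a vector v ∈ ℝⁿ such that φ(v) > 0 for all φ ∈ Φ. -/
/-- If a finite set `Φ` of linear functionals on `ℝⁿ` is positively nontrivial
(every nontrivial nonnegative combination is nonzero), then there is a vector `v`
with `φ v > 0` for all `φ ∈ Φ`. -/
theorem exists_pos_vector_of_posNontrivial (n : ℕ)
    (Φ : Finset ((Fin n → ℝ) →ₗ[ℝ] ℝ))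
    (hpos : ∀ α : ((Fin n → ℝ) →ₗ[ℝ] ℝ) → ℝ,
      (∀ φ ∈ Φ, 0 ≤ α φ) → (∃ φ ∈ Φ, α φ ≠ 0) → ∑ φ ∈ Φ, α φ • φ ≠ 0) :
    ∃ v : Fin n → ℝ, ∀ φ ∈ Φ, 0 < φ v := by
  classical
  set e : Fin n → (Fin n → ℝ) := fun i j => if i = j then 1 else 0 with he
  set wmap : ((Fin n → ℝ) →ₗ[ℝ] ℝ) → (Fin n → ℝ) := fun φ i => φ (e i) with hwm
  have hinj : Function.Injective wmap := by
    intro φ ψ h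
    apply LinearMap.ext; intro x
    rw [LinearMap.pi_apply_eq_sum_univ φ, LinearMap.pi_apply_eq_sum_univ ψ]
    refine Finset.sum_congr rfl fun i _ => ?_
    have := congrFun h i
    simpa [hwm, he] using congrArg (x i • ·) this
  set S : Finset (Fin n → ℝ) := Φ.image wmap with hS
  have h0 : (0 : Fin n → ℝ) ∉ convexHull ℝ (S : Set (Fin n → ℝ)) := by
    intro h0
    rw [Finset.convexHull_eq] at h0
    obtain ⟨c, hc0, hc1, hcc⟩ := h0
    rw [S.centerMass_eq_of_sum_1 _ hc1] at hcc
    set α : ((Fin n → ℝ) →ₗ[ℝ] ℝ) → ℝ := fun φ => c (wmap φ) with hα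
    have hα0 : ∀ φ ∈ Φ, 0 ≤ α φ := fun φ hφ =>
      hc0 _ (Finset.mem_image_of_mem _ hφ)
    have hαne : ∃ φ ∈ Φ, α φ ≠ 0 := by
      by_contra hcon
      push_neg at hcon
      have : ∑ y ∈ S, c y = 0 := by
        rw [hS, Finset.sum_image (fun a ha b hb h => hinj h)]
        exact Finset.sum_eq_zero hcon
      rw [hc1] at this; exact one_ne_zero this
    refine hpos α hα0 hαne ?_
    have hsum : ∑ φ ∈ Φ, α φ • wmap φ = 0 := by
      have himg : ∑ y ∈ Φ.image wmap, c y • y = ∑ φ ∈ Φ, c (wmap φ) • wmap φ :=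
        Finset.sum_image (fun a _ b _ h => hinj h)
      rw [hα]
      rw [← himg]
      simpa using hcc
    apply LinearMap.ext; intro x
    rw [LinearMap.pi_apply_eq_sum_univ (∑ φ ∈ Φ, α φ • φ) x]
    have hterm : ∀ i, (∑ φ ∈ Φ, α φ • φ) (e i) = 0 := by
      intro i
      have := congrFun hsum i
      simpa [Finset.sum_apply, hwm] using this
    simp only [LinearMap.zero_apply]
    refine Finset.sum_eq_zero fun i _ => ?_
    have : (∑ φ ∈ Φ, α φ • φ) (fun j => if i = j then 1 else 0) = 0 := hterm i
    rw [this, smul_zero]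
  have hconv : Convex ℝ (convexHull ℝ (S : Set (Fin n → ℝ))) := convex_convexHull _ _
  have hclosed : IsClosed (convexHull ℝ (S : Set (Fin n → ℝ))) :=
    (S.finite_toSet.isCompact_convexHull ℝ).isClosed
  obtain ⟨f, u, hfu, hub⟩ := geometric_hahn_banach_point_closed hconv hclosed h0
  have hu : 0 < u := by simpa using hfu
  refine ⟨fun i => f (e i), fun φ hφ => ?_⟩
  have hmem : wmap φ ∈ convexHull ℝ (S : Set (Fin n → ℝ)) :=
    subset_convexHull _ _ (by exact_mod_cast Finset.mem_image_of_mem _ hφ)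
  have hfw : 0 < f (wmap φ) := hu.trans (hub _ hmem)
  have : φ (fun i => f (e i)) = f (wmap φ) := by
    have h2 := LinearMap.pi_apply_eq_sum_univ (f : (Fin n → ℝ) →ₗ[ℝ] ℝ) (wmap φ)
    simp only [ContinuousLinearMap.coe_coe] at h2
    rw [LinearMap.pi_apply_eq_sum_univ φ, h2]
    refine Finset.sum_congr rfl fun i _ => ?_
    simp [hwm, he, smul_eq_mul, mul_comm]
  rw [this]; exact hfw
end

section
/- Let U ⊆ ℝⁿ be an open set such that there exists v ∈ ℝⁿ with the properties: (i) if x ∈ U and s > 0 then x + s v ∈ U, and (ii) for every x ∈ ℝⁿ there exists s₀ > 0 with x + s v ∈ U for all s ≥ s₀. Then U is contractible. -/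
open Set Function

/-- An open set `U ⊆ ℝⁿ` which is invariant under positive translations by some
vector `v` and eventually absorbs every point along the direction `v` is
contractible. -/
theorem contractible_of_ray_absorbing (n : ℕ) (U : Set (EuclideanSpace ℝ (Fin n)))
    (hU : IsOpen U) (v : EuclideanSpace ℝ (Fin n))
    (hinv : ∀ x ∈ U, ∀ s : ℝ, 0 < s → x + s • v ∈ U)
    (habs : ∀ x : EuclideanSpace ℝ (Fin n), ∃ s₀ : ℝ, 0 < s₀ ∧
      ∀ s : ℝ, s₀ ≤ s → x + s • v ∈ U) :
    ContractibleSpace U := by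
    -- the open cover
  set O : ℕ → Set (EuclideanSpace ℝ (Fin n)) := fun k => {x | x + (k : ℝ) • v ∈ U} with hO
  have hOopen : ∀ k, IsOpen (O k) := fun k =>
    hU.preimage (by continuity : Continuous fun x : EuclideanSpace ℝ (Fin n) => x + (k : ℝ) • v)
  have hOcov : (univ : Set (EuclideanSpace ℝ (Fin n))) ⊆ ⋃ k, O k := by
    intro x _
    obtain ⟨s₀, hs₀, hs⟩ := habs x
    refine mem_iUnion.2 ⟨⌈s₀⌉₊, hs _ (Nat.le_ceil s₀)⟩
  obtain ⟨ρ, hρ⟩ := PartitionOfUnity.exists_isSubordinate isClosed_univ O hOopen hOcov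
  -- the continuous "height bound" function
  set τ : EuclideanSpace ℝ (Fin n) → ℝ := fun x => ∑ᶠ k, ρ k x • ((k : ℝ) + 1) with hτdef
  have hτc : Continuous τ :=
    hρ.continuous_finsum_smul hOopen fun i => continuousOn_const
  have hτ : ∀ (x : EuclideanSpace ℝ (Fin n)) (s : ℝ), τ x ≤ s → x + s • v ∈ U := by
    intro x s hs
    have hex : ∃ k, ρ k x ≠ 0 := by
      obtain ⟨i, hi⟩ := ρ.exists_pos (mem_univ x)
      exact ⟨i, hi.ne'⟩
    classical
    set k₀ := Nat.find hex with hk₀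
    have hk₀ne : ρ k₀ x ≠ 0 := Nat.find_spec hex
    have hk₀mem : x ∈ O k₀ := hρ k₀ (subset_tsupport _ hk₀ne)
    -- τ x ≥ k₀ + 1
    have hfin : {k | ρ k x ≠ 0}.Finite := ρ.locallyFinite.point_finite x
    set T : Finset ℕ := hfin.toFinset with hT
    have hsub : support (fun k => ρ k x • ((k : ℝ) + 1)) ⊆ (T : Set ℕ) := by
      intro k hk
      simp only [hT, Finite.coe_toFinset, mem_setOf_eq]
      intro h0
      simp [h0] at hk
    have hsub' : support (fun k => ρ k x) ⊆ (T : Set ℕ) := by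
      intro k hk
      simpa [hT] using hk
    have h1 : ∑ k ∈ T, ρ k x = 1 := by
      rw [← finsum_eq_sum_of_support_subset _ hsub']
      exact ρ.sum_eq_one (mem_univ x)
    have hτx : ((k₀ : ℝ) + 1) ≤ τ x := by
      have : τ x = ∑ k ∈ T, ρ k x • ((k : ℝ) + 1) :=
        finsum_eq_sum_of_support_subset _ hsub
      rw [this]
      calc ((k₀ : ℝ) + 1) = ∑ k ∈ T, ρ k x * ((k₀ : ℝ) + 1) := by
            rw [← Finset.sum_mul, h1, one_mul]
        _ ≤ ∑ k ∈ T, ρ k x • ((k : ℝ) + 1) := by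
            refine Finset.sum_le_sum fun k _ => ?_
            rcases eq_or_ne (ρ k x) 0 with h0 | h0
            · simp [h0]
            · have hk₀le : k₀ ≤ k := Nat.find_min' hex h0
              have : ((k₀ : ℝ) + 1) ≤ ((k : ℝ) + 1) := by
                exact_mod_cast Nat.succ_le_succ hk₀le
              exact mul_le_mul_of_nonneg_left this (ρ.nonneg k x)
    have hgt : (k₀ : ℝ) < s := by linarith
    have := hinv _ hk₀mem (s - (k₀ : ℝ)) (by linarith)
    have heq : x + (k₀ : ℝ) • v + (s - (k₀ : ℝ)) • v = x + s • v := by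
      rw [add_assoc, ← add_smul]; ring_nf
    rwa [heq] at this
  -- the retraction-like map
  have hmem_r : ∀ y : EuclideanSpace ℝ (Fin n), y + max (τ y) 0 • v ∈ U := fun y => hτ y _ (le_max_left _ _)
  let r : C(U, U) :=
    ⟨fun x => ⟨(x : EuclideanSpace ℝ (Fin n)) + max (τ x) 0 • v, hmem_r _⟩, by
      refine Continuous.subtype_mk ?_ _
      exact continuous_subtype_val.add
        (((hτc.comp continuous_subtype_val).max continuous_const).smul continuous_const)⟩
  let p₀ : U := ⟨(0 : EuclideanSpace ℝ (Fin n)) + max (τ 0) 0 • v, hmem_r _⟩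
  -- first homotopy : id ∼ r
  let H₁ : ContinuousMap.Homotopy (ContinuousMap.id U) r :=
    { toFun := fun p =>
        ⟨(p.2 : EuclideanSpace ℝ (Fin n)) + ((p.1 : ℝ) * max (τ p.2) 0) • v, by
          rcases eq_or_lt_of_le
              (mul_nonneg p.1.2.1 (le_max_right (τ p.2) 0)) with h | h
          · rw [← h, zero_smul, add_zero]; exact p.2.2
          · exact hinv _ p.2.2 _ h⟩
      continuous_toFun := by
        refine Continuous.subtype_mk ?_ _
        refine (continuous_subtype_val.comp continuous_snd).add ?_
        refine Continuous.smul (?_ : Continuous fun p : unitInterval × U => (p.1 : ℝ) * max (τ p.2) 0) continuous_const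
        exact (continuous_subtype_val.comp continuous_fst).mul
          ((hτc.comp (continuous_subtype_val.comp continuous_snd)).max continuous_const)
      map_zero_left := fun x => by
        ext1
        simp
      map_one_left := fun x => by
        ext1
        simp [r] }
  -- second homotopy : r ∼ const p₀
  let H₂ : ContinuousMap.Homotopy r (ContinuousMap.const U p₀) :=
    { toFun := fun p =>
        ⟨(1 - (p.1 : ℝ)) • (p.2 : EuclideanSpace ℝ (Fin n)) + max (τ ((1 - (p.1 : ℝ)) • (p.2 : EuclideanSpace ℝ (Fin n)))) 0 • v,
          hmem_r _⟩
      continuous_toFun := by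
        have hy : Continuous fun p : unitInterval × U =>
            (1 - (p.1 : ℝ)) • (p.2 : EuclideanSpace ℝ (Fin n)) :=
          (continuous_const.sub (continuous_subtype_val.comp continuous_fst)).smul
            (continuous_subtype_val.comp continuous_snd)
        refine Continuous.subtype_mk ?_ _
        exact hy.add (((hτc.comp hy).max continuous_const).smul continuous_const)
      map_zero_left := fun x => by
        ext1
        simp [r]
      map_one_left := fun x => by
        ext1
        simp [p₀] }
  have : (ContinuousMap.id U).Nullhomotopic := ⟨p₀, ⟨H₁.trans H₂⟩⟩
  exact (contractible_iff_id_nullhomotopic U).2 this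
end

section
/- Let U ⊆ ℝⁿ be a nonempty open convex set. The stabilizer Stab(U) = {v ∈ ℝⁿ : U + v = U} is a linear subspace of ℝⁿ. -/
/-- The stabilizer of a nonempty open convex set `U ⊆ ℝⁿ` under the translation
action is a linear subspace of `ℝⁿ`. -/
theorem stabilizer_of_open_convex_is_subspace (n : ℕ) (U : Set (Fin n → ℝ))
    (hne : U.Nonempty) (hop : IsOpen U) (hconv : Convex ℝ U) :
    ∃ S : Submodule ℝ (Fin n → ℝ),
      (S : Set (Fin n → ℝ)) = {v : Fin n → ℝ | (fun u => u + v) '' U = U} := by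
  set S : Set (Fin n → ℝ) := {v : Fin n → ℝ | (fun u => u + v) '' U = U} with hS
  have hzero : (0 : Fin n → ℝ) ∈ S := by
    show (fun u => u + 0) '' U = U
    simp
  have hadd : ∀ v w : Fin n → ℝ, v ∈ S → w ∈ S → v + w ∈ S := by
    intro v w hv hw
    show (fun u => u + (v + w)) '' U = U
    have hcomp : (fun u : Fin n → ℝ => u + (v + w)) =
        (fun u => u + w) ∘ (fun u => u + v) := by
      funext u; simp [Function.comp, add_assoc]
    rw [hcomp, Set.image_comp, hv, hw]
  have hneg : ∀ v : Fin n → ℝ, v ∈ S → -v ∈ S := by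
    intro v hv
    show (fun u => u + (-v)) '' U = U
    have hv' : (fun u => u + v) '' U = U := hv
    have h1 : (fun u => u + (-v)) '' ((fun u => u + v) '' U)
        = (fun u => u + (-v)) '' U := by rw [hv']
    rw [← Set.image_comp] at h1
    simpa using h1.symm
  have hsub : ∀ v ∈ S, ∀ c : ℝ, 0 ≤ c → c ≤ 1 →
      (fun u => u + c • v) '' U ⊆ U := by
    intro v hv c hc0 hc1 x hx
    obtain ⟨u, hu, rfl⟩ := hx
    have huv : u + v ∈ U := by
      have hv' : (fun u => u + v) '' U = U := hv
      rw [← hv']; exact ⟨u, hu, rfl⟩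
    have h := hconv hu huv (by linarith : (0:ℝ) ≤ 1 - c) hc0 (by ring)
    convert h using 1
    module
  have hscl01 : ∀ v ∈ S, ∀ c : ℝ, 0 ≤ c → c ≤ 1 → c • v ∈ S := by
    intro v hv c hc0 hc1
    show (fun u => u + c • v) '' U = U
    apply Set.Subset.antisymm (hsub v hv c hc0 hc1)
    intro w hw
    have hneg' : w + c • (-v) ∈ U := hsub (-v) (hneg v hv) c hc0 hc1 ⟨w, hw, rfl⟩
    refine ⟨w + c • (-v), hneg', ?_⟩
    simp only [smul_neg]
    abel
  -- integer multiples
  have hzsmul : ∀ v ∈ S, ∀ m : ℤ, (m : ℝ) • v ∈ S := by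
    intro v hv m
    have hn : ∀ k : ℕ, (k : ℝ) • v ∈ S := by
      intro k
      induction k with
      | zero => simpa using hzero
      | succ k ih =>
        have := hadd _ _ ih hv
        convert this using 1
        push_cast
        module
    rcases le_or_gt 0 m with hm | hm
    · lift m to ℕ using hm
      exact_mod_cast hn m
    · have h : ((-m).toNat : ℝ) • v ∈ S := hn _
      have := hneg _ h
      convert this using 1
      rw [← neg_smul]
      congr 1
      have hmt : ((-m).toNat : ℤ) = -m := Int.toNat_of_nonneg (by omega)
      have hmt' : (((-m).toNat : ℕ) : ℝ) = -(m : ℝ) := by exact_mod_cast congrArg (fun z : ℤ => (z : ℝ)) hmt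
      rw [hmt']; ring
  refine ⟨{ carrier := S,
            zero_mem' := hzero,
            add_mem' := fun {a b} ha hb => hadd a b ha hb,
            smul_mem' := ?_ }, rfl⟩
  intro c v hv
  have h1 : ((⌊c⌋ : ℝ)) • v ∈ S := hzsmul v hv ⌊c⌋
  have h2 : Int.fract c • v ∈ S :=
    hscl01 v hv _ (Int.fract_nonneg c) (le_of_lt (Int.fract_lt_one c))
  have h3 := hadd _ _ h1 h2
  convert h3 using 1
  rw [← add_smul]
  congr 1
  rw [Int.fract]
  ring
end
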